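/- Let L be an infinite locally compact Hausdorff topological space without isolated points and let 𝒜 be a somewhat regular closed linear subspace of C₀(L). Then 𝒜 contains an asymptotically isometric copy of ℓ¹: there exist a sequence (δ_n) of real numbers with 0 ≤ δ_n < 1 for all n and δ_n → 0, and a sequence (x_n) in the closed unit ball of 𝒜, such that for every absolutely summable real sequence (a_n), the series Σ a_n x_n converges in 𝒜 and Σ (1 − δ_n)|a_n| ≤ ‖Σ a_n x_n‖ ≤ Σ |a_n|. -/

import Mathlib

open scoped ZeroAtInfty
open Filter Topology

/-- A linear subspace `𝒜` of `C₀(L, ℝ)` is *somewhat regular* if for every non-empty open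
subset `V` of `L` and every `ε` with `0 < ε < 1` there is `f ∈ 𝒜` with `‖f‖ = 1` and
`|f x| ≤ ε` for every `x ∈ L \ V`. -/
def SomewhatRegular {L : Type*} [TopologicalSpace L]
    (𝒜 : Submodule ℝ C₀(L, ℝ)) : Prop :=
  ∀ V : Set L, IsOpen V → V.Nonempty → ∀ ε : ℝ, 0 < ε → ε < 1 →
    ∃ f ∈ 𝒜, ‖f‖ = 1 ∧ ∀ x ∉ V, |f x| ≤ ε

namespace AISL1

variable {L : Type*} [TopologicalSpace L]

theorem apply_le_norm (f : C₀(L, ℝ)) (x : L) : |f x| ≤ ‖f‖ := by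
  rw [← ZeroAtInftyContinuousMap.norm_toBCF_eq_norm]
  simpa using f.toBCF.norm_coe_le_norm x

theorem norm_le_of (f : C₀(L, ℝ)) {C : ℝ} (hC : 0 ≤ C) (h : ∀ x, |f x| ≤ C) : ‖f‖ ≤ C := by
  rw [← ZeroAtInftyContinuousMap.norm_toBCF_eq_norm]
  exact (BoundedContinuousFunction.norm_le hC).2 (fun x => by simpa using h x)

/-- Evaluation at a point as a continuous linear map on `C₀(L, ℝ)`. -/
noncomputable def evalCLM (x : L) : C₀(L, ℝ) →L[ℝ] ℝ :=
  LinearMap.mkContinuous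
    { toFun := fun f => f x
      map_add' := fun f g => rfl
      map_smul' := fun c f => rfl } 1
    (fun f => by
      simpa [Real.norm_eq_abs] using apply_le_norm f x)

@[simp] theorem evalCLM_apply (x : L) (f : C₀(L, ℝ)) : evalCLM x f = f x := rfl

theorem exists_disjoint_opens [T2Space L] (hL : ∀ x : L, ¬ IsOpen ({x} : Set L))
    {V : Set L} (hV : IsOpen V) (hne : V.Nonempty) :
    ∃ W₁ W₂ : Set L, IsOpen W₁ ∧ IsOpen W₂ ∧ W₁.Nonempty ∧ W₂.Nonempty ∧
      W₁ ⊆ V ∧ W₂ ⊆ V ∧ Disjoint W₁ W₂ := by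
  obtain ⟨x, hx⟩ := hne
  have hy : ∃ y ∈ V, y ≠ x := by
    by_contra h
    push_neg at h
    have hVx : V = {x} := subset_antisymm (fun y hy => h y hy) (by simpa using hx)
    exact hL x (hVx ▸ hV)
  obtain ⟨y, hyV, hyx⟩ := hy
  obtain ⟨O₁, O₂, hO₁, hO₂, hxO, hyO, hdisj⟩ := t2_separation hyx.symm
  exact ⟨V ∩ O₁, V ∩ O₂, hV.inter hO₁, hV.inter hO₂, ⟨x, hx, hxO⟩, ⟨y, hyV, hyO⟩,
    Set.inter_subset_left, Set.inter_subset_left,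
    hdisj.mono Set.inter_subset_right Set.inter_subset_right⟩

theorem exists_peak (𝒜 : Submodule ℝ C₀(L, ℝ)) (h𝒜 : SomewhatRegular 𝒜)
    {W : Set L} (hW : IsOpen W) (hne : W.Nonempty) {ε η : ℝ}
    (hε0 : 0 < ε) (hε1 : ε < 1) (hη0 : 0 < η) (hη1 : η < 1) (hεη : ε ≤ 1 - η) :
    ∃ g ∈ 𝒜, ‖g‖ = 1 ∧ (∀ x ∉ W, |g x| ≤ ε) ∧
      ∃ A : Set L, IsOpen A ∧ A.Nonempty ∧ A ⊆ W ∧ ∀ x ∈ A, 1 - η < g x := by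
  obtain ⟨f, hf𝒜, hfnorm, hfsmall⟩ := h𝒜 W hW hne ε hε0 hε1
  have hx0 : ∃ x₀, 1 - η < |f x₀| := by
    by_contra h
    push_neg at h
    have h' := norm_le_of f (by linarith) h
    rw [hfnorm] at h'
    linarith
  obtain ⟨x₀, hx₀⟩ := hx0
  have hx₀W : x₀ ∈ W := by
    by_contra hxW
    have := hfsmall x₀ hxW
    linarith
  obtain ⟨g, hg𝒜, hgnorm, hgsmall, hgx₀⟩ :
      ∃ g ∈ 𝒜, ‖g‖ = 1 ∧ (∀ x ∉ W, |g x| ≤ ε) ∧ 1 - η < g x₀ := by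
    rcases le_or_gt 0 (f x₀) with h0 | h0
    · exact ⟨f, hf𝒜, hfnorm, hfsmall, by rwa [abs_of_nonneg h0] at hx₀⟩
    · refine ⟨-f, 𝒜.neg_mem hf𝒜, by rw [norm_neg]; exact hfnorm, ?_, ?_⟩
      · intro x hx
        have : (-f) x = -(f x) := rfl
        rw [this, abs_neg]
        exact hfsmall x hx
      · have : (-f) x₀ = -(f x₀) := rfl
        rw [this]
        rwa [abs_of_neg h0] at hx₀
  refine ⟨g, hg𝒜, hgnorm, hgsmall, W ∩ (⇑g) ⁻¹' Set.Ioi (1 - η),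
    hW.inter (isOpen_Ioi.preimage (map_continuous g)), ⟨x₀, hx₀W, hgx₀⟩,
    Set.inter_subset_left, fun x hx => hx.2⟩

/-- The key analytic step: given finitely many pairwise disjoint nonempty open sets with
prescribed signs, there is an element of `𝒜` of norm at most `1` which is larger than
`1 - η` (resp. smaller than `-(1 - η)`) on a nonempty open subset of each of them. -/
theorem step [T2Space L] (𝒜 : Submodule ℝ C₀(L, ℝ)) (h𝒜 : SomewhatRegular 𝒜)
    {ι : Type} [Fintype ι] (W : ι → Set L)
    (hWo : ∀ i, IsOpen (W i)) (hWne : ∀ i, (W i).Nonempty)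
    (hdisj : ∀ i j, i ≠ j → Disjoint (W i) (W j))
    {η : ℝ} (hη0 : 0 < η) (hη1 : η < 1) (b : ι → Bool) :
    ∃ f ∈ 𝒜, ‖f‖ ≤ 1 ∧ ∃ A : ι → Set L,
      (∀ i, IsOpen (A i)) ∧ (∀ i, (A i).Nonempty) ∧ (∀ i, A i ⊆ W i) ∧
      (∀ i, ∀ x ∈ A i, if b i then 1 - η ≤ f x else f x ≤ -(1 - η)) := by
  classical
  set m : ℝ := (Fintype.card ι : ℝ) with hm
  have hm0 : 0 ≤ m := Nat.cast_nonneg _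
  set ε : ℝ := η / (8 * (m + 1)) with hε
  have hε0 : 0 < ε := by positivity
  have hmε : m * ε ≤ η / 8 := by
    rw [hε, mul_div_assoc', div_le_div_iff₀ (by positivity) (by norm_num : (0:ℝ) < 8)]
    nlinarith
  have hε8 : ε ≤ η / 8 := by
    rw [hε]
    exact div_le_div_of_nonneg_left hη0.le (by norm_num) (by nlinarith)
  have hε1 : ε < 1 := by nlinarith
  set η' : ℝ := η / 4 with hη'
  have hη'0 : 0 < η' := by positivity
  have hη'1 : η' < 1 := by rw [hη']; linarith
  have hεη' : ε ≤ 1 - η' := by rw [hη']; nlinarith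
  choose g hg𝒜 hgnorm hgsmall A hAopen hAne hAsub hAgt using
    fun i => exists_peak 𝒜 h𝒜 (hWo i) (hWne i) hε0 hε1 hη'0 hη'1 hεη'
  set c : ι → ℝ := fun i => if b i then 1 else -1 with hc
  have habs_c : ∀ i, |c i| = 1 := by
    intro i
    rw [hc]
    by_cases hb : b i <;> simp [hb]
  set f₀ : C₀(L, ℝ) := ∑ i, c i • g i with hf₀def
  have hf₀ : ∀ x, f₀ x = ∑ i, c i * g i x := by
    intro x
    calc f₀ x = evalCLM x f₀ := rfl
      _ = ∑ i, evalCLM x (c i • g i) := map_sum _ _ _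
      _ = ∑ i, c i * g i x := by
          refine Finset.sum_congr rfl fun i _ => ?_
          rw [map_smul, smul_eq_mul, evalCLM_apply]
  have key : ∀ (x : L) (i₀ : ι), x ∈ W i₀ →
      ∑ j ∈ Finset.univ.erase i₀, |c j * g j x| ≤ m * ε := by
    intro x i₀ hxi₀
    have hsmall : ∀ j ∈ Finset.univ.erase i₀, |c j * g j x| ≤ ε := by
      intro j hj
      have hne' : j ≠ i₀ := Finset.ne_of_mem_erase hj
      have hxW : x ∉ W j := fun hxW => (hdisj j i₀ hne').le_bot ⟨hxW, hxi₀⟩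
      rw [abs_mul, habs_c, one_mul]
      exact hgsmall j x hxW
    calc ∑ j ∈ Finset.univ.erase i₀, |c j * g j x|
        ≤ ∑ _j ∈ Finset.univ.erase i₀, ε := Finset.sum_le_sum hsmall
      _ = (Finset.univ.erase i₀).card * ε := by rw [Finset.sum_const, nsmul_eq_mul]
      _ ≤ m * ε := by
          refine mul_le_mul_of_nonneg_right ?_ hε0.le
          rw [hm]
          exact_mod_cast (Finset.card_le_card (Finset.erase_subset _ _)).trans
            (le_of_eq Finset.card_univ)
  have habs : ∀ x, ∑ i, |c i * g i x| ≤ 1 + m * ε := by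
    intro x
    by_cases hx : ∃ i₀, x ∈ W i₀
    · obtain ⟨i₀, hxi₀⟩ := hx
      have h1 : |c i₀ * g i₀ x| ≤ 1 := by
        rw [abs_mul, habs_c, one_mul]
        calc |g i₀ x| ≤ ‖g i₀‖ := apply_le_norm _ _
          _ = 1 := hgnorm i₀
      calc ∑ i, |c i * g i x|
          = |c i₀ * g i₀ x| + ∑ j ∈ Finset.univ.erase i₀, |c j * g j x| :=
            (Finset.add_sum_erase _ _ (Finset.mem_univ i₀)).symm
        _ ≤ 1 + m * ε := add_le_add h1 (key x i₀ hxi₀)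
    · push_neg at hx
      calc ∑ i, |c i * g i x| ≤ ∑ _i : ι, ε := by
            refine Finset.sum_le_sum fun i _ => ?_
            rw [abs_mul, habs_c, one_mul]
            exact hgsmall i x (hx i)
        _ = m * ε := by rw [Finset.sum_const, nsmul_eq_mul, Finset.card_univ, hm]
        _ ≤ 1 + m * ε := by linarith
  set t : ℝ := m * ε with ht
  have ht0 : 0 ≤ t := mul_nonneg hm0 hε0.le
  have ht8 : t ≤ η / 8 := hmε
  have hr0 : (0:ℝ) < 1 + t := by linarith
  set r : ℝ := (1 + t)⁻¹ with hr
  have hrpos : 0 < r := inv_pos.2 hr0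
  have hrt : r * (1 + t) = 1 := inv_mul_cancel₀ hr0.ne'
  set f : C₀(L, ℝ) := r • f₀ with hfdef
  have hfx : ∀ x, f x = r * f₀ x := fun x => rfl
  have hf𝒜 : f ∈ 𝒜 :=
    𝒜.smul_mem r (Submodule.sum_mem 𝒜 fun i _ => 𝒜.smul_mem (c i) (hg𝒜 i))
  have hfnorm : ‖f‖ ≤ 1 := by
    refine norm_le_of f zero_le_one fun x => ?_
    have h1 : |f₀ x| ≤ 1 + t := by
      rw [hf₀ x]
      exact (Finset.abs_sum_le_sum_abs _ _).trans (habs x)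
    calc |f x| = r * |f₀ x| := by rw [hfx, abs_mul, abs_of_pos hrpos]
      _ ≤ r * (1 + t) := mul_le_mul_of_nonneg_left h1 hrpos.le
      _ = 1 := hrt
  refine ⟨f, hf𝒜, hfnorm, A, hAopen, hAne, hAsub, ?_⟩
  intro i x hx
  have hxW : x ∈ W i := hAsub i hx
  have hg1 : 1 - η' < g i x := hAgt i x hx
  have hg2 : |g i x| ≤ 1 := by
    calc |g i x| ≤ ‖g i‖ := apply_le_norm _ _
      _ = 1 := hgnorm i
  have hsum : f₀ x - c i * g i x = ∑ j ∈ Finset.univ.erase i, c j * g j x := by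
    rw [hf₀ x, ← Finset.add_sum_erase _ _ (Finset.mem_univ i)]
    ring
  have hrest : |f₀ x - c i * g i x| ≤ t := by
    rw [hsum]
    exact (Finset.abs_sum_le_sum_abs _ _).trans (key x i hxW)
  rw [abs_le] at hrest
  by_cases hb : b i
  · have hci : c i = 1 := by rw [hc]; simp [hb]
    have hlow : (1 - η) * (1 + t) ≤ f₀ x := by
      rw [hci, one_mul] at hrest
      rw [hη'] at hg1
      nlinarith
    have : 1 - η ≤ r * f₀ x := by
      calc 1 - η = r * ((1 - η) * (1 + t)) := by
            rw [show r * ((1 - η) * (1 + t)) = (1 - η) * (r * (1 + t)) by ring, hrt, mul_one]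
        _ ≤ r * f₀ x := mul_le_mul_of_nonneg_left hlow hrpos.le
    simpa [hb, hfx x] using this
  · have hci : c i = -1 := by rw [hc]; simp [hb]
    have hhigh : f₀ x ≤ -((1 - η) * (1 + t)) := by
      rw [hci] at hrest
      rw [hη'] at hg1
      nlinarith
    have : r * f₀ x ≤ -(1 - η) := by
      calc r * f₀ x ≤ r * (-((1 - η) * (1 + t))) := mul_le_mul_of_nonneg_left hhigh hrpos.le
        _ = -(1 - η) := by
            rw [show r * (-((1 - η) * (1 + t))) = -((1 - η) * (r * (1 + t))) by ring, hrt, mul_one]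
    simpa [hb, hfx x] using this

/-- The invariant satisfied by the level-`n` cells of the tree of open sets. -/
def Good (n : ℕ) (U : (ℕ → Bool) → Set L) : Prop :=
  (∀ σ, IsOpen (U σ)) ∧ (∀ σ, (U σ).Nonempty) ∧
  (∀ σ σ', (∀ k, k < n → σ k = σ' k) → U σ = U σ') ∧
  (∀ σ σ' k, k < n → σ k ≠ σ' k → Disjoint (U σ) (U σ'))

theorem good_zero [Nonempty L] : Good (L := L) 0 (fun _ => Set.univ) :=
  ⟨fun _ => isOpen_univ, fun _ => Set.univ_nonempty, fun _ _ _ => rfl,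
    fun _ _ k hk _ => absurd hk (Nat.not_lt_zero k)⟩

theorem exists_next [T2Space L] (hL : ∀ x : L, ¬ IsOpen ({x} : Set L))
    (𝒜 : Submodule ℝ C₀(L, ℝ)) (h𝒜 : SomewhatRegular 𝒜)
    {η : ℝ} (hη0 : 0 < η) (hη1 : η < 1)
    (n : ℕ) (U : (ℕ → Bool) → Set L) (hU : Good n U) :
    ∃ p : C₀(L, ℝ) × ((ℕ → Bool) → Set L),
      p.1 ∈ 𝒜 ∧ ‖p.1‖ ≤ 1 ∧ Good (n+1) p.2 ∧
      (∀ σ, p.2 σ ⊆ U σ) ∧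
      (∀ σ, ∀ x ∈ p.2 σ, if σ n then 1 - η ≤ p.1 x else p.1 x ≤ -(1 - η)) := by
  classical
  obtain ⟨hUo, hUne, hUeq, hUdisj⟩ := hU
  set ext : (Fin n → Bool) → (ℕ → Bool) :=
    fun v k => if h : k < n then v ⟨k, h⟩ else false with hext
  choose W₁ W₂ hW₁o hW₂o hW₁ne hW₂ne hW₁sub hW₂sub hW₁₂disj using
    fun v : Fin n → Bool => exists_disjoint_opens hL (hUo (ext v)) (hUne (ext v))
  set W : (Fin n → Bool) × Bool → Set L :=
    fun p => if p.2 then W₁ p.1 else W₂ p.1 with hWdef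
  have hWo : ∀ p, IsOpen (W p) := by
    rintro ⟨v, bb⟩
    by_cases h : bb <;> simp [hWdef, h, hW₁o, hW₂o]
  have hWne : ∀ p, (W p).Nonempty := by
    rintro ⟨v, bb⟩
    by_cases h : bb <;> simp [hWdef, h, hW₁ne, hW₂ne]
  have hWsub : ∀ p, W p ⊆ U (ext p.1) := by
    rintro ⟨v, bb⟩
    by_cases h : bb <;> simp [hWdef, h, hW₁sub, hW₂sub]
  have hWdisj : ∀ p q, p ≠ q → Disjoint (W p) (W q) := by
    rintro ⟨v, bv⟩ ⟨w, bw⟩ hne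
    by_cases hvw : v = w
    · subst hvw
      have hbb : bv ≠ bw := fun h => hne (by rw [h])
      have hd := hW₁₂disj v
      rcases Bool.eq_false_or_eq_true bv with hb | hb <;>
        rcases Bool.eq_false_or_eq_true bw with hb' | hb' <;>
          subst hb <;> subst hb'
      · exact absurd rfl hbb
      · simpa [hWdef] using hd
      · simpa [hWdef] using hd.symm
      · exact absurd rfl hbb
    · obtain ⟨i, hi⟩ := Function.ne_iff.mp hvw
      have hdiff : ext v i ≠ ext w i := by
        simp only [hext, dif_pos i.isLt, Fin.eta]
        exact hi
      exact (hUdisj (ext v) (ext w) i i.isLt hdiff).mono (hWsub (v, bv)) (hWsub (w, bw))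
  obtain ⟨f, hf𝒜, hfnorm, A, hAo, hAne, hAsub, hAineq⟩ :=
    step 𝒜 h𝒜 W hWo hWne hWdisj hη0 hη1 (fun p => p.2)
  set U' : (ℕ → Bool) → Set L := fun σ => A (fun i => σ i, σ n) with hU'
  have hagree : ∀ σ : ℕ → Bool, U (ext (fun i : Fin n => σ i)) = U σ := by
    intro σ
    refine hUeq _ _ fun k hk => ?_
    simp only [hext, dif_pos hk]
  refine ⟨(f, U'), hf𝒜, hfnorm, ⟨fun σ => hAo _, fun σ => hAne _, ?_, ?_⟩, ?_, ?_⟩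
  · intro σ σ' h
    have h1 : (fun i : Fin n => σ i) = (fun i : Fin n => σ' i) :=
      funext fun i => h i (Nat.lt_succ_of_lt i.isLt)
    have h2 : σ n = σ' n := h n (Nat.lt_succ_self n)
    show A _ = A _
    rw [show ((fun i : Fin n => σ i), σ n) = ((fun i : Fin n => σ' i), σ' n) by
      rw [h1, h2]]
  · intro σ σ' k hk hne
    have hne' : ((fun i : Fin n => σ i), σ n) ≠ ((fun i : Fin n => σ' i), σ' n) := by
      rcases Nat.lt_succ_iff_lt_or_eq.mp hk with hk' | rfl
      · intro hcontra
        exact hne (congrFun (congrArg Prod.fst hcontra) ⟨k, hk'⟩)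
      · intro hcontra
        exact hne (congrArg Prod.snd hcontra)
    exact (hWdisj _ _ hne').mono (hAsub _) (hAsub _)
  · intro σ
    exact (hAsub _).trans ((hWsub _).trans (hagree σ).le)
  · intro σ x hx
    exact hAineq ((fun i : Fin n => σ i), σ n) x hx

/-- The tree of open cells together with the functions linking consecutive levels. -/
noncomputable def tree [T2Space L] [Nonempty L] (hL : ∀ x : L, ¬ IsOpen ({x} : Set L))
    (𝒜 : Submodule ℝ C₀(L, ℝ)) (h𝒜 : SomewhatRegular 𝒜)
    (δ : ℕ → ℝ) (hδ : ∀ n, 0 < δ n ∧ δ n < 1) :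
    (n : ℕ) → {p : ((ℕ → Bool) → Set L) × C₀(L, ℝ) // Good n p.1} :=
  Nat.rec
    ⟨((fun _ => Set.univ), 0), good_zero⟩
    (fun n prev =>
      ⟨((exists_next hL 𝒜 h𝒜 (hδ n).1 (hδ n).2 n prev.1.1 prev.2).choose.2,
        (exists_next hL 𝒜 h𝒜 (hδ n).1 (hδ n).2 n prev.1.1 prev.2).choose.1),
       (exists_next hL 𝒜 h𝒜 (hδ n).1 (hδ n).2 n prev.1.1 prev.2).choose_spec.2.2.1⟩)

theorem tree_spec [T2Space L] [Nonempty L] (hL : ∀ x : L, ¬ IsOpen ({x} : Set L))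
    (𝒜 : Submodule ℝ C₀(L, ℝ)) (h𝒜 : SomewhatRegular 𝒜)
    (δ : ℕ → ℝ) (hδ : ∀ n, 0 < δ n ∧ δ n < 1) (n : ℕ) :
    (tree hL 𝒜 h𝒜 δ hδ (n+1)).1.2 ∈ 𝒜 ∧
    ‖(tree hL 𝒜 h𝒜 δ hδ (n+1)).1.2‖ ≤ 1 ∧
    (∀ σ, (tree hL 𝒜 h𝒜 δ hδ (n+1)).1.1 σ ⊆ (tree hL 𝒜 h𝒜 δ hδ n).1.1 σ) ∧
    (∀ σ, ∀ x ∈ (tree hL 𝒜 h𝒜 δ hδ (n+1)).1.1 σ,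
      if σ n then 1 - δ n ≤ (tree hL 𝒜 h𝒜 δ hδ (n+1)).1.2 x
      else (tree hL 𝒜 h𝒜 δ hδ (n+1)).1.2 x ≤ -(1 - δ n)) := by
  have h := (exists_next hL 𝒜 h𝒜 (hδ n).1 (hδ n).2 n
      (tree hL 𝒜 h𝒜 δ hδ n).1.1 (tree hL 𝒜 h𝒜 δ hδ n).2).choose_spec
  exact ⟨h.1, h.2.1, h.2.2.2.1, h.2.2.2.2⟩

attribute [irreducible] tree

end AISL1

set_option maxHeartbeats 10000000 in
set_option synthInstance.maxHeartbeats 2000000 in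
/-- If `L` has no isolated points, every somewhat regular closed linear subspace `𝒜` of
`C₀(L)` contains an asymptotically isometric copy of `ℓ¹`. -/
theorem somewhat_regular_contains_asymptotically_isometric_l1
    {L : Type*} [TopologicalSpace L] [LocallyCompactSpace L] [T2Space L] [Infinite L]
    (hL : ∀ x : L, ¬ IsOpen ({x} : Set L))
    (𝒜 : Submodule ℝ C₀(L, ℝ)) (hclosed : IsClosed (𝒜 : Set C₀(L, ℝ)))
    (h𝒜 : SomewhatRegular 𝒜) :
    ∃ (δ : ℕ → ℝ) (x : ℕ → 𝒜),
      (∀ n, 0 ≤ δ n ∧ δ n < 1) ∧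
      Tendsto δ atTop (𝓝 0) ∧
      (∀ n, ‖x n‖ ≤ 1) ∧
      ∀ a : ℕ → ℝ, Summable (fun n => |a n|) →
        ∃ s : 𝒜, HasSum (fun n => a n • x n) s ∧
          (∑' n, (1 - δ n) * |a n|) ≤ ‖s‖ ∧ ‖s‖ ≤ ∑' n, |a n| := by
  classical
  haveI : Nonempty L := inferInstance
  haveI : CompleteSpace 𝒜 := hclosed.completeSpace_coe
  set δ : ℕ → ℝ := fun n => (1/2 : ℝ)^(n+1) with hδdef
  have hδ : ∀ n, 0 < δ n ∧ δ n < 1 := by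
    intro n
    refine ⟨by positivity, ?_⟩
    calc (1/2 : ℝ)^(n+1) ≤ (1/2 : ℝ)^1 :=
          pow_le_pow_of_le_one (by norm_num) (by norm_num) (Nat.le_add_left 1 n)
      _ < 1 := by norm_num
  set U : ℕ → (ℕ → Bool) → Set L := fun n => (AISL1.tree hL 𝒜 h𝒜 δ hδ n).1.1 with hU
  set F : ℕ → C₀(L, ℝ) := fun n => (AISL1.tree hL 𝒜 h𝒜 δ hδ (n+1)).1.2 with hF
  have hspec := fun n => AISL1.tree_spec hL 𝒜 h𝒜 δ hδ n
  set x : ℕ → 𝒜 := fun n => ⟨F n, (hspec n).1⟩ with hxdef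
  have hxnorm : ∀ n, ‖x n‖ ≤ 1 := fun n => (hspec n).2.1
  refine ⟨δ, x, fun n => ⟨(hδ n).1.le, (hδ n).2⟩, ?_, hxnorm, ?_⟩
  · have h1 : Tendsto (fun n : ℕ => (1/2 : ℝ)^n) atTop (𝓝 0) :=
      tendsto_pow_atTop_nhds_zero_of_lt_one (by norm_num) (by norm_num)
    exact h1.comp (tendsto_add_atTop_nat 1)
  · intro a ha
    have hbound : ∀ n, ‖a n • x n‖ ≤ |a n| := by
      intro n
      have h0 : ‖a n • x n‖ = ‖a n • F n‖ := (Submodule.norm_coe (a n • x n)).symm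
      rw [h0]
      refine AISL1.norm_le_of _ (abs_nonneg _) fun y => ?_
      have h1 : (a n • F n) y = a n * F n y := rfl
      rw [h1, abs_mul]
      calc |a n| * |F n y| ≤ |a n| * 1 := by
            refine mul_le_mul_of_nonneg_left ?_ (abs_nonneg _)
            exact (AISL1.apply_le_norm (F n) y).trans (hspec n).2.1
        _ = |a n| := mul_one _
    have hsummable : Summable (fun n => a n • x n) := by
      exact Summable.of_norm_bounded ha hbound
    have hsumnorm : Summable (fun n => ‖a n • x n‖) := by
      exact Summable.of_nonneg_of_le (fun n => norm_nonneg (a n • x n)) hbound ha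
    set s : 𝒜 := ∑' n, a n • x n with hs
    have hg0 : ∀ n, 0 ≤ (1 - δ n) * |a n| :=
      fun n => mul_nonneg (by linarith [(hδ n).2]) (abs_nonneg _)
    have hgle : ∀ n, (1 - δ n) * |a n| ≤ |a n| :=
      fun n => mul_le_of_le_one_left (abs_nonneg _) (by linarith [(hδ n).1])
    have hsum1 : Summable (fun n => (1 - δ n) * |a n|) :=
      Summable.of_nonneg_of_le hg0 hgle ha
    refine ⟨s, hsummable.hasSum, ?_, ?_⟩
    · -- lower bound
      have hS : HasSum (fun n => a n • F n) ((s : C₀(L, ℝ))) := by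
        have h := (𝒜.subtypeL).hasSum hsummable.hasSum
        simpa using h
      refine le_of_forall_pos_le_add fun ε hε => ?_
      obtain ⟨N, hN⟩ : ∃ N, ∑' k, |a (k + N)| < ε / 2 := by
        have h0 : Tendsto (fun N => ∑' k, |a (k + N)|) atTop (𝓝 0) :=
          tendsto_sum_nat_add (fun n => |a n|)
        have := (h0.eventually (eventually_lt_nhds (show (0:ℝ) < ε / 2 by positivity))).exists
        simpa using this
      set σb : ℕ → Bool := fun n => decide (0 ≤ a n) with hσb
      obtain ⟨x₀, hx₀⟩ := ((AISL1.tree hL 𝒜 h𝒜 δ hδ N).2).2.1 σb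
      have hmono : ∀ k l : ℕ, k ≤ l → U l σb ⊆ U k σb := by
        intro k l hkl
        induction l, hkl using Nat.le_induction with
        | base => exact subset_rfl
        | succ l hkl ih => exact ((hspec l).2.2.1 σb).trans ih
      have hx₀' : ∀ n, n < N → x₀ ∈ U (n+1) σb := fun n hn => hmono (n+1) N hn hx₀
      have hkey : ∀ n ∈ Finset.range N, (1 - δ n) * |a n| ≤ a n * F n x₀ := by
        intro n hn
        rw [Finset.mem_range] at hn
        have h := (hspec n).2.2.2 σb x₀ (hx₀' n hn)
        by_cases h0 : 0 ≤ a n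
        · rw [if_pos (by simp [hσb, h0])] at h
          rw [abs_of_nonneg h0, mul_comm ((1:ℝ) - δ n)]
          exact mul_le_mul_of_nonneg_left h h0
        · rw [if_neg (by simp [hσb, h0])] at h
          push_neg at h0
          rw [abs_of_neg h0]
          calc (1 - δ n) * (-(a n)) = a n * (-(1 - δ n)) := by ring
            _ ≤ a n * F n x₀ := mul_le_mul_of_nonpos_left h h0.le
      have hSx : HasSum (fun n => a n * F n x₀) ((s : C₀(L, ℝ)) x₀) := by
        have h := (AISL1.evalCLM x₀).hasSum hS
        simpa [smul_eq_mul] using h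
      have hsummA : Summable (fun n => a n * F n x₀) := hSx.summable
      have habsF : ∀ n, |a n * F n x₀| ≤ |a n| := by
        intro n
        rw [abs_mul]
        calc |a n| * |F n x₀| ≤ |a n| * 1 :=
              mul_le_mul_of_nonneg_left
                ((AISL1.apply_le_norm (F n) x₀).trans (hxnorm n)) (abs_nonneg _)
          _ = |a n| := mul_one _
      have hsplitF : (∑ i ∈ Finset.range N, a i * F i x₀) +
          ∑' k, a (k + N) * F (k + N) x₀ = (s : C₀(L, ℝ)) x₀ := by
        rw [Summable.sum_add_tsum_nat_add N hsummA, hSx.tsum_eq]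
      have hsplitG : (∑ i ∈ Finset.range N, (1 - δ i) * |a i|) +
          ∑' k, (1 - δ (k + N)) * |a (k + N)| = ∑' n, (1 - δ n) * |a n| :=
        Summable.sum_add_tsum_nat_add N hsum1
      have htailA : Summable (fun k => |a (k + N)|) := (summable_nat_add_iff N).2 ha
      have htailF : Summable (fun k => a (k + N) * F (k + N) x₀) :=
        (summable_nat_add_iff N).2 hsummA
      have htailG : Summable (fun k => (1 - δ (k + N)) * |a (k + N)|) :=
        (summable_nat_add_iff N).2 hsum1
      have hTf : -(ε / 2) ≤ ∑' k, a (k + N) * F (k + N) x₀ := by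
        have h1 : |∑' k, a (k + N) * F (k + N) x₀| ≤ ∑' k, |a (k + N)| := by
          have h2 : ‖∑' k, a (k + N) * F (k + N) x₀‖ ≤ ∑' k, ‖a (k + N) * F (k + N) x₀‖ :=
            norm_tsum_le_tsum_norm (by
              simpa only [Real.norm_eq_abs] using
                (Summable.of_nonneg_of_le (fun k => abs_nonneg _)
                  (fun k => habsF (k + N)) htailA))
          rw [Real.norm_eq_abs] at h2
          refine h2.trans ?_
          refine Summable.tsum_le_tsum (fun k => ?_) ?_ htailA
          · simpa only [Real.norm_eq_abs] using habsF (k + N)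
          · simpa only [Real.norm_eq_abs] using
              (Summable.of_nonneg_of_le (fun k => abs_nonneg _)
                (fun k => habsF (k + N)) htailA)
        have := neg_abs_le (∑' k, a (k + N) * F (k + N) x₀)
        linarith
      have hTg : ∑' k, (1 - δ (k + N)) * |a (k + N)| ≤ ε / 2 := by
        have h1 : ∑' k, (1 - δ (k + N)) * |a (k + N)| ≤ ∑' k, |a (k + N)| :=
          Summable.tsum_le_tsum (fun k => hgle (k + N)) htailG htailA
        linarith
      have hhead : (∑ i ∈ Finset.range N, (1 - δ i) * |a i|) ≤
          ∑ i ∈ Finset.range N, a i * F i x₀ := Finset.sum_le_sum hkey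
      have hSxle : (s : C₀(L, ℝ)) x₀ ≤ ‖s‖ := by
        have h1 : (s : C₀(L, ℝ)) x₀ ≤ |(s : C₀(L, ℝ)) x₀| := le_abs_self _
        have h2 : |(s : C₀(L, ℝ)) x₀| ≤ ‖(s : C₀(L, ℝ))‖ := AISL1.apply_le_norm _ _
        have h3 : ‖(s : C₀(L, ℝ))‖ = ‖s‖ := Submodule.norm_coe s
        linarith
      linarith
    · -- upper bound
      calc ‖s‖ ≤ ∑' n, ‖a n • x n‖ := norm_tsum_le_tsum_norm hsumnorm
        _ ≤ ∑' n, |a n| := Summable.tsum_le_tsum hbound hsumnorm ha
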